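/- Let Ω be the Gaussian probability amplitude on ℝⁿ with mean η and position covariance matrix V. Then the nonclassical momentum covariance matrix (Ṽ_nc)_{jk} := −ħ² ∫ Ω ∂_j∂_kΩ dq satisfies Ṽ_nc = (ħ²/4) V⁻¹; equivalently, V · Ṽ_nc = (ħ²/4) Iₙ. -/

import Mathlib

open MeasureTheory Matrix

/-- Partial derivative `∂ⱼ f` of a function on `ℝⁿ`. -/
noncomputable def pd {n : ℕ} (j : Fin n) (f : (Fin n → ℝ) → ℝ) (q : Fin n → ℝ) : ℝ :=
  fderiv ℝ f q (Pi.single j 1)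

/-- The nonclassical momentum covariance matrix `(Ṽnc)ⱼₖ = -ħ² ∫ Ω ∂ⱼ∂ₖΩ`. -/
noncomputable def Vnc {n : ℕ} (hbar : ℝ) (Ω : (Fin n → ℝ) → ℝ) :
    Matrix (Fin n) (Fin n) ℝ :=
  Matrix.of fun j k => -hbar ^ 2 * ∫ q, Ω q * pd j (pd k Ω) q

/-- The Gaussian probability amplitude on `ℝⁿ` with mean `η` and position covariance
matrix `V`:  `Ω(q) = ((2π)ⁿ det V)^{-1/4} exp(-(1/4)(q-η)⋅V⁻¹(q-η))`. -/
noncomputable def gaussAmp {n : ℕ} (η : Fin n → ℝ) (V : Matrix (Fin n) (Fin n) ℝ)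
    (q : Fin n → ℝ) : ℝ :=
  ((2 * Real.pi) ^ n * V.det) ^ (-(1 / 4 : ℝ)) *
    Real.exp (-(1 / 4) * ((q - η) ⬝ᵥ V⁻¹.mulVec (q - η)))

/-! ### Auxiliary one-dimensional Gaussian integrals -/

lemma int_g : ∫ x : ℝ, Real.exp (-(1/2) * x^2) = Real.sqrt (2*Real.pi) := by
  rw [integral_gaussian]
  rw [show (Real.pi / (1/2)) = 2 * Real.pi by ring]

lemma intg_g : Integrable fun x : ℝ => Real.exp (-(1/2) * x^2) :=
  integrable_exp_neg_mul_sq (by norm_num)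

lemma intg_xg : Integrable fun x : ℝ => x * Real.exp (-(1/2) * x^2) :=
  integrable_mul_exp_neg_mul_sq (by norm_num)

lemma intg_x2g : Integrable fun x : ℝ => x^2 * Real.exp (-(1/2) * x^2) := by
  have := integrable_rpow_mul_exp_neg_mul_sq (b := 1/2) (by norm_num) (s := 2) (by norm_num)
  simpa [Real.rpow_natCast] using this

lemma int_xg : ∫ x : ℝ, x * Real.exp (-(1/2) * x^2) = 0 := by
  have h := integral_neg_eq_self (fun x : ℝ => x * Real.exp (-(1/2) * x^2)) (volume : Measure ℝ)
  simp only [neg_sq] at h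
  have h2 : ∫ x:ℝ, -x * Real.exp (-(1/2)*x^2) = - ∫ x:ℝ, x * Real.exp (-(1/2)*x^2) := by
    rw [← integral_neg]; congr 1; ext x; ring
  rw [h2] at h
  linarith

lemma int_x2g : ∫ x : ℝ, x^2 * Real.exp (-(1/2) * x^2) = Real.sqrt (2*Real.pi) := by
  have habs : ∀ x : ℝ, |x|^2 * Real.exp (-(1/2) * |x|^2) = x^2 * Real.exp (-(1/2) * x^2) := by
    intro x; rw [sq_abs]
  calc ∫ x : ℝ, x^2 * Real.exp (-(1/2) * x^2)
      = ∫ x : ℝ, |x|^2 * Real.exp (-(1/2) * |x|^2) := by simp_rw [habs]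
    _ = 2 * ∫ x in Set.Ioi (0:ℝ), x^2 * Real.exp (-(1/2) * x^2) :=
        integral_comp_abs (f := fun x => x^2 * Real.exp (-(1/2) * x^2))
    _ = Real.sqrt (2*Real.pi) := by
        have h := integral_rpow_mul_exp_neg_mul_rpow (p := 2) (q := 2) (b := 1/2)
          (by norm_num) (by norm_num) (by norm_num)
        rw [show ((2:ℝ)) = ((2:ℕ):ℝ) by norm_num] at h
        simp only [Real.rpow_natCast] at h
        push_cast at h
        rw [h]
        rw [show (-(2+1)/2 : ℝ) = -(3/2) by norm_num]
        rw [show ((2+1)/2 : ℝ) = 1/2 + 1 by norm_num, Real.Gamma_add_one (by norm_num),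
          Real.Gamma_one_half_eq]
        rw [show ((1:ℝ)/2) ^ (-(3/2) : ℝ) = 2 ^ ((3/2):ℝ) by
          rw [one_div, Real.inv_rpow (by norm_num), ← Real.rpow_neg (by norm_num)]; norm_num]
        rw [show ((3/2):ℝ) = 1 + 1/2 by norm_num, Real.rpow_add (by norm_num), Real.rpow_one,
          show ((2:ℝ) ^ ((1:ℝ)/2)) = Real.sqrt 2 by rw [Real.sqrt_eq_rpow]]
        rw [Real.sqrt_mul (by norm_num)]
        ring

/-! ### Multidimensional Gaussian moment integrals -/

noncomputable def g1 (t : ℝ) : ℝ := Real.exp (-(1/2) * t^2)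

lemma intg_g1 : Integrable g1 := intg_g
lemma int_g1 : ∫ x, g1 x = Real.sqrt (2*Real.pi) := int_g

variable {n : ℕ}

lemma M0 : ∫ x : Fin n → ℝ, ∏ i, g1 (x i) = Real.sqrt (2*Real.pi) ^ n := by
  rw [MeasureTheory.volume_pi, MeasureTheory.integral_fintype_prod_eq_pow (ι := Fin n) g1, int_g1]
  simp

lemma Ig0 : Integrable (fun x : Fin n → ℝ => ∏ i, g1 (x i)) :=
  Integrable.fintype_prod (fun _ => intg_g1)

noncomputable def F1 (a b i : Fin n) (t : ℝ) : ℝ :=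
  (if i = a then t else 1) * ((if i = b then t else 1) * g1 t)

lemma intg_F1 (a b i : Fin n) : Integrable (F1 a b i) := by
  unfold F1
  rcases eq_or_ne i a with rfl | ha <;> rcases eq_or_ne i b with h | hb
  · simp only [if_pos rfl, h, if_pos, if_true]
    have : (fun t : ℝ => t * (t * g1 t)) = fun t => t^2 * Real.exp (-(1/2)*t^2) := by
      ext t; unfold g1; ring
    rw [this]; exact intg_x2g
  · simp only [if_pos rfl, if_neg hb, one_mul, if_true]
    exact intg_xg
  · subst h
    simp only [if_pos rfl, if_neg ha, if_true]
    have : (fun t : ℝ => 1 * (t * g1 t)) = fun t : ℝ => t * Real.exp (-(1/2)*t^2) := by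
      ext t; unfold g1; ring
    rw [this]; exact intg_xg
  · simp only [if_neg ha, if_neg hb, one_mul]
    exact intg_g1

lemma prod_F1 (a b : Fin n) (x : Fin n → ℝ) :
    ∏ i, F1 a b i (x i) = x a * x b * ∏ i, g1 (x i) := by
  unfold F1
  rw [Finset.prod_mul_distrib, Finset.prod_mul_distrib,
    Finset.prod_ite_eq' Finset.univ a x, Finset.prod_ite_eq' Finset.univ b x]
  simp only [Finset.mem_univ, if_true]
  ring

lemma Igab (a b : Fin n) : Integrable (fun x : Fin n → ℝ => x a * x b * ∏ i, g1 (x i)) := by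
  have := Integrable.fintype_prod (E := ℝ) (f := F1 a b) (fun i => intg_F1 a b i)
  simp only [prod_F1] at this
  exact this

lemma Mab (a b : Fin n) :
    ∫ x : Fin n → ℝ, x a * x b * ∏ i, g1 (x i)
      = if a = b then Real.sqrt (2*Real.pi) ^ n else 0 := by
  have h1 : (fun x : Fin n → ℝ => x a * x b * ∏ i, g1 (x i))
      = fun x => ∏ i, F1 a b i (x i) := by ext x; rw [prod_F1]
  rw [h1, MeasureTheory.volume_pi, MeasureTheory.integral_fintype_prod_eq_prod (ι := Fin n) (F1 a b)]
  rcases eq_or_ne a b with rfl | hab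
  · simp only [if_pos rfl]
    have hfac : ∀ i : Fin n, ∫ t, F1 a a i t = Real.sqrt (2*Real.pi) := by
      intro i
      rcases eq_or_ne i a with rfl | ha
      · unfold F1
        simp only [if_pos rfl, if_true]
        have : (fun t : ℝ => t * (t * g1 t)) = fun t => t^2 * Real.exp (-(1/2)*t^2) := by
          ext t; unfold g1; ring
        rw [this, int_x2g]
      · unfold F1
        simp only [if_neg ha, one_mul]
        exact int_g1
    rw [Finset.prod_congr rfl (fun i _ => hfac i), Finset.prod_const]
    simp
  · rw [if_neg hab]
    apply Finset.prod_eq_zero (Finset.mem_univ a)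
    unfold F1
    simp only [if_pos rfl, if_neg hab, if_true]
    have : (fun t : ℝ => t * (1 * g1 t)) = fun t : ℝ => t * Real.exp (-(1/2)*t^2) := by
      ext t; unfold g1; ring
    rw [this, int_xg]

/-! ### Derivative machinery -/

/-- dot-product with a fixed vector, as a continuous linear map -/
noncomputable def dpL (w : Fin n → ℝ) : (Fin n → ℝ) →L[ℝ] ℝ :=
  ∑ i, w i • ContinuousLinearMap.proj i

lemma dpL_apply (w v : Fin n → ℝ) : dpL w v = w ⬝ᵥ v := by
  simp [dpL, dotProduct]

lemma dpL_single (w : Fin n → ℝ) (j : Fin n) : dpL w (Pi.single j 1) = w j := by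
  rw [dpL_apply, dotProduct]
  simp [Pi.single_apply]

lemma hasFDerivAt_mulVec_app (M : Matrix (Fin n) (Fin n) ℝ) (η : Fin n → ℝ) (k : Fin n)
    (q : Fin n → ℝ) :
    HasFDerivAt (fun q : Fin n → ℝ => (M *ᵥ (q - η)) k) (dpL (fun j => M k j)) q := by
  have h : (fun q : Fin n → ℝ => (M *ᵥ (q - η)) k)
      = fun q => ∑ j, M k j * (q j - η j) := by
    ext q; simp [Matrix.mulVec, dotProduct]
  have h2 : HasFDerivAt (fun q : Fin n → ℝ => ∑ j, M k j * (q j - η j))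
      ((∑ j, M k j • ContinuousLinearMap.proj j : (Fin n → ℝ) →L[ℝ] ℝ)) q := by
    apply HasFDerivAt.fun_sum
    intro j _
    have := (hasFDerivAt_apply (𝕜 := ℝ) j q).sub_const (η j)
    exact this.const_mul (M k j)
  rw [h]
  exact h2

lemma hasFDerivAt_quadform (M : Matrix (Fin n) (Fin n) ℝ) (hM : Mᵀ = M) (η : Fin n → ℝ)
    (q : Fin n → ℝ) :
    HasFDerivAt (fun q : Fin n → ℝ => (q - η) ⬝ᵥ M *ᵥ (q - η))
      (dpL ((2:ℝ) • (M *ᵥ (q - η)))) q := by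
  have hMe : ∀ i j, M j i = M i j := fun i j => congrFun (congrFun hM i) j
  have h : (fun q : Fin n → ℝ => (q - η) ⬝ᵥ M *ᵥ (q - η))
      = fun q => ∑ i, (q i - η i) * (M *ᵥ (q - η)) i := by
    ext q; simp [dotProduct]
  have h2 : HasFDerivAt (fun q : Fin n → ℝ => ∑ i, (q i - η i) * (M *ᵥ (q - η)) i)
      ((∑ i, ((q i - η i) • dpL (fun j => M i j)
        + (M *ᵥ (q - η)) i • ContinuousLinearMap.proj i) : (Fin n → ℝ) →L[ℝ] ℝ)) q := by
    apply HasFDerivAt.fun_sum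
    intro i _
    exact ((hasFDerivAt_apply (𝕜 := ℝ) i q).sub_const (η i)).mul (hasFDerivAt_mulVec_app M η i q)
  rw [h]
  convert h2 using 1
  ext v
  simp only [ContinuousLinearMap.sum_apply, ContinuousLinearMap.add_apply,
    ContinuousLinearMap.smul_apply, ContinuousLinearMap.proj_apply, dpL_apply, smul_eq_mul,
    Pi.smul_apply]
  rw [Finset.sum_add_distrib]
  simp only [dotProduct, Matrix.mulVec, Finset.mul_sum, Pi.sub_apply, Pi.smul_apply, smul_eq_mul]
  rw [Finset.sum_comm (s := Finset.univ) (t := Finset.univ)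
    (f := fun i j => (q i - η i) * (M i j * v j))]
  rw [← Finset.sum_add_distrib]
  apply Finset.sum_congr rfl
  intro i _
  rw [Finset.sum_mul, Finset.sum_mul, ← Finset.sum_add_distrib]
  apply Finset.sum_congr rfl
  intro j _
  rw [hMe j i]
  ring

lemma dpL_smul (a : ℝ) (w : Fin n → ℝ) : dpL (a • w) = a • dpL w := by
  ext v; simp [dpL_apply, smul_dotProduct]

variable {η : Fin n → ℝ} {V : Matrix (Fin n) (Fin n) ℝ}

lemma inv_symm (hV : V.PosDef) : (V⁻¹)ᵀ = V⁻¹ := by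
  have hVsym : Vᵀ = V := by
    have h := hV.isHermitian
    ext i j
    simpa [Matrix.conjTranspose_apply] using congrFun (congrFun h i) j
  rw [Matrix.transpose_nonsing_inv, hVsym]

lemma hasFDerivAt_gaussAmp (hV : V.PosDef) (q : Fin n → ℝ) :
    HasFDerivAt (gaussAmp η V)
      ((gaussAmp η V q) • dpL ((-(1/2) : ℝ) • (V⁻¹ *ᵥ (q - η)))) q := by
  have h1 := hasFDerivAt_quadform V⁻¹ (inv_symm hV) η q
  have h2 := (h1.const_mul (-(1/4 : ℝ))).exp
  have h3 := h2.const_mul (((2 * Real.pi) ^ n * V.det) ^ (-(1 / 4 : ℝ)))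
  have heq : (gaussAmp η V q) • dpL ((-(1/2) : ℝ) • (V⁻¹ *ᵥ (q - η)))
      = ((2 * Real.pi) ^ n * V.det) ^ (-(1 / 4 : ℝ)) •
        (Real.exp (-(1 / 4) * ((q - η) ⬝ᵥ V⁻¹ *ᵥ (q - η))) •
          ((-(1/4 : ℝ)) • dpL ((2:ℝ) • (V⁻¹ *ᵥ (q - η))))) := by
    rw [dpL_smul, dpL_smul, smul_smul, smul_smul, smul_smul, smul_smul]
    unfold gaussAmp
    congr 1
    ring
  rw [heq]
  exact h3

lemma pd_gaussAmp (hV : V.PosDef) (k : Fin n) :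
    pd k (gaussAmp η V)
      = fun q => gaussAmp η V q * (-(1/2) * (V⁻¹ *ᵥ (q - η)) k) := by
  ext q
  rw [pd, (hasFDerivAt_gaussAmp hV q).fderiv]
  simp [dpL_single]

lemma pd_pd_gaussAmp (hV : V.PosDef) (j k : Fin n) (q : Fin n → ℝ) :
    pd j (pd k (gaussAmp η V)) q
      = gaussAmp η V q * ((-(1/2) * (V⁻¹ *ᵥ (q - η)) j) * (-(1/2) * (V⁻¹ *ᵥ (q - η)) k)
          + (-(1/2) * V⁻¹ k j)) := by
  rw [pd_gaussAmp hV k]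
  have hh : HasFDerivAt (fun q : Fin n → ℝ => -(1/2 : ℝ) * (V⁻¹ *ᵥ (q - η)) k)
      ((-(1/2) : ℝ) • dpL (fun j => V⁻¹ k j)) q :=
    (hasFDerivAt_mulVec_app V⁻¹ η k q).const_mul _
  have hprod := (hasFDerivAt_gaussAmp (η := η) hV q).mul hh
  rw [pd, show (fun q => gaussAmp η V q * (-(1/2 : ℝ) * (V⁻¹ *ᵥ (q - η)) k))
      = gaussAmp η V * (fun q => -(1/2 : ℝ) * (V⁻¹ *ᵥ (q - η)) k) from rfl, hprod.fderiv]
  simp only [ContinuousLinearMap.add_apply, ContinuousLinearMap.smul_apply, dpL_single,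
    smul_eq_mul, Pi.smul_apply]
  ring

/-! ### Change of variables -/

lemma integral_subst (S : Matrix (Fin n) (Fin n) ℝ) (hS : S.det ≠ 0) (η : Fin n → ℝ)
    (f : (Fin n → ℝ) → ℝ) (hf : Continuous f) :
    ∫ q, f q = |S.det| * ∫ x, f (S *ᵥ x + η) := by
  have hmap := Real.map_matrix_volume_pi_eq_smul_volume_pi (M := S) hS
  have habs : (|S.det| : ℝ) ≠ 0 := abs_ne_zero.mpr hS
  have hvol : (ENNReal.ofReal |S.det|) • Measure.map (Matrix.toLin' S) volume
      = (volume : Measure (Fin n → ℝ)) := by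
    rw [hmap, smul_smul, ← ENNReal.ofReal_mul (abs_nonneg _), ← abs_mul,
      mul_inv_cancel₀ hS, abs_one, ENNReal.ofReal_one, one_smul]
  have hcont : Continuous (fun y : Fin n → ℝ => f (y + η)) :=
    hf.comp (continuous_id.add continuous_const)
  have hmeas : AEMeasurable (Matrix.toLin' S) (volume : Measure (Fin n → ℝ)) :=
    (LinearMap.continuous_on_pi _).measurable.aemeasurable
  have hfm : AEStronglyMeasurable (fun y : Fin n → ℝ => f (y + η))
      (Measure.map (Matrix.toLin' S) volume) := by
    rw [hmap]
    exact hcont.aestronglyMeasurable.mono_ac Measure.smul_absolutelyContinuous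
  calc ∫ q, f q = ∫ y : Fin n → ℝ, f (y + η) := (integral_add_right_eq_self f η).symm
    _ = ∫ y, f (y + η)
        ∂((ENNReal.ofReal |S.det|) • Measure.map (Matrix.toLin' S) volume) := by rw [hvol]
    _ = |S.det| * ∫ y, f (y + η) ∂(Measure.map (Matrix.toLin' S) volume) := by
        rw [integral_smul_measure, ENNReal.toReal_ofReal (abs_nonneg _), smul_eq_mul]
    _ = |S.det| * ∫ x, f (Matrix.toLin' S x + η) := by rw [integral_map hmeas hfm]
    _ = |S.det| * ∫ x, f (S *ᵥ x + η) := by simp [Matrix.toLin'_apply]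

open scoped MatrixOrder

/-- for the Gaussian amplitude with covariance `V`,
`Ṽnc = (ħ²/4) V⁻¹`, equivalently `V ⋅ Ṽnc = (ħ²/4) 𝟙`. -/
theorem Vnc_gaussian {n : ℕ} (hn : 1 ≤ n) (hbar : ℝ) (hhbar : 0 < hbar)
    (η : Fin n → ℝ) (V : Matrix (Fin n) (Fin n) ℝ) (hV : V.PosDef) :
    Vnc hbar (gaussAmp η V) = (hbar ^ 2 / 4) • V⁻¹ ∧
    V * Vnc hbar (gaussAmp η V) = (hbar ^ 2 / 4) • (1 : Matrix (Fin n) (Fin n) ℝ) := by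
  classical
  have hdetV : 0 < V.det := hV.det_pos
  set X : ℝ := (2 * Real.pi) ^ n * V.det with hXdef
  have hX : 0 < X := mul_pos (pow_pos (by positivity) n) hdetV
  set c : ℝ := X ^ (-(1/4 : ℝ)) with hcdef
  have hc : 0 < c := Real.rpow_pos_of_pos hX _
  set S : Matrix (Fin n) (Fin n) ℝ := CFC.sqrt V with hSdef
  have hS2 : S * S = V := CFC.sqrt_mul_sqrt_self V hV.posSemidef.nonneg
  have hSsym : Sᵀ = S := by
    have h := (Matrix.nonneg_iff_posSemidef.mp (CFC.sqrt_nonneg V)).isHermitian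
    ext i j
    simpa [Matrix.conjTranspose_apply] using congrFun (congrFun h i) j
  have hdS2 : S.det * S.det = V.det := by rw [← Matrix.det_mul, hS2]
  have hdS : S.det ≠ 0 := by
    intro h0
    rw [h0, mul_zero] at hdS2
    exact hdetV.ne' hdS2.symm
  have hdSU : IsUnit S.det := isUnit_iff_ne_zero.mpr hdS
  set d : ℝ := |S.det| with hddef
  have hd : 0 < d := abs_pos.mpr hdS
  have hd2 : d * d = V.det := by rw [hddef, abs_mul_abs_self, hdS2]
  set K : ℝ := Real.sqrt (2*Real.pi) ^ n with hKdef
  have hK : 0 < K := pow_pos (Real.sqrt_pos.mpr (by positivity)) n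
  -- normalisation
  have hc4 : c^2 * c^2 = X⁻¹ := by
    rw [hcdef, ← Real.rpow_natCast (X ^ (-(1/4 : ℝ))) 2, ← Real.rpow_mul hX.le,
      ← Real.rpow_add hX]
    norm_num [Real.rpow_neg_one]
  have hK2 : K * K = (2 * Real.pi) ^ n := by
    rw [hKdef, ← pow_add, ← two_mul, pow_mul, Real.sq_sqrt (by positivity)]
  have NORM : d * (c^2 * K) = 1 := by
    have hsq : (d * (c^2 * K)) * (d * (c^2 * K)) = 1 := by
      have : (d * (c^2 * K)) * (d * (c^2 * K)) = (d * d) * (c^2 * c^2) * (K * K) := by ring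
      rw [this, hd2, hc4, hK2, hXdef]
      field_simp
    have hpos : 0 < d * (c^2 * K) := by positivity
    have hfac : (d * (c^2 * K) - 1) * (d * (c^2 * K) + 1) = 0 := by nlinarith [hsq]
    rcases mul_eq_zero.mp hfac with h | h
    · linarith
    · linarith
  -- matrix identities
  have hVinv : V⁻¹ = S⁻¹ * S⁻¹ := by rw [← hS2, Matrix.mul_inv_rev]
  have hSinvsym : (S⁻¹)ᵀ = S⁻¹ := by rw [Matrix.transpose_nonsing_inv, hSsym]
  have hAS : V⁻¹ * S = S⁻¹ := by
    rw [hVinv, Matrix.mul_assoc, Matrix.nonsing_inv_mul S hdSU, Matrix.mul_one]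
  have hsum : ∀ j k, ∑ a, S⁻¹ j a * S⁻¹ k a = V⁻¹ j k := by
    intro j k
    rw [hVinv, Matrix.mul_apply]
    apply Finset.sum_congr rfl
    intro a _
    rw [show S⁻¹ a k = S⁻¹ k a from (congrFun (congrFun hSinvsym a) k).symm]
  have hAkj : ∀ j k, V⁻¹ k j = V⁻¹ j k := fun j k => congrFun (congrFun (inv_symm hV) j) k
  -- continuity helpers
  have hconte : ∀ i : Fin n, Continuous fun q : Fin n → ℝ => (V⁻¹ *ᵥ (q - η)) i := by
    intro i
    have h : (fun q : Fin n → ℝ => (V⁻¹ *ᵥ (q - η)) i)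
        = fun q => ∑ l, V⁻¹ i l * (q l - η l) := by
      ext q; simp [Matrix.mulVec, dotProduct]
    rw [h]
    exact continuous_finset_sum _ fun l _ =>
      continuous_const.mul ((continuous_apply l).sub continuous_const)
  have hcontq : Continuous fun q : Fin n → ℝ => (q - η) ⬝ᵥ V⁻¹ *ᵥ (q - η) := by
    have h : (fun q : Fin n → ℝ => (q - η) ⬝ᵥ V⁻¹ *ᵥ (q - η))
        = fun q => ∑ i, (q i - η i) * (V⁻¹ *ᵥ (q - η)) i := by
      ext q; simp [dotProduct]
    rw [h]
    exact continuous_finset_sum _ fun i _ =>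
      (((continuous_apply i).sub continuous_const).mul (hconte i))
  -- the key entrywise computation
  have key : ∀ j k, Vnc hbar (gaussAmp η V) j k = (hbar^2/4) * V⁻¹ j k := by
    intro j k
    have hVnc : Vnc hbar (gaussAmp η V) j k
        = -hbar ^ 2 * ∫ q, gaussAmp η V q * pd j (pd k (gaussAmp η V)) q := rfl
    set f : (Fin n → ℝ) → ℝ := fun q =>
      c^2 * Real.exp (-(1/2) * ((q - η) ⬝ᵥ V⁻¹ *ᵥ (q - η))) *
        ((-(1/2) * (V⁻¹ *ᵥ (q - η)) j) * (-(1/2) * (V⁻¹ *ᵥ (q - η)) k)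
          + (-(1/2) * V⁻¹ k j)) with hfdef
    have hexp2 : ∀ t Y : ℝ,
        (c * Real.exp (-(1/4) * t)) * ((c * Real.exp (-(1/4) * t)) * Y)
          = c^2 * Real.exp (-(1/2) * t) * Y := by
      intro t Y
      have hE : Real.exp (-(1/4)*t) * Real.exp (-(1/4)*t) = Real.exp (-(1/2)*t) := by
        rw [← Real.exp_add]; ring_nf
      calc (c * Real.exp (-(1/4) * t)) * ((c * Real.exp (-(1/4) * t)) * Y)
          = (Real.exp (-(1/4)*t) * Real.exp (-(1/4)*t)) * (c*c*Y) := by ring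
        _ = Real.exp (-(1/2)*t) * (c*c*Y) := by rw [hE]
        _ = c^2 * Real.exp (-(1/2)*t) * Y := by ring
    have hintegrand : (fun q => gaussAmp η V q * pd j (pd k (gaussAmp η V)) q) = f := by
      ext q
      rw [pd_pd_gaussAmp hV j k q, hfdef]
      unfold gaussAmp
      rw [← hXdef, ← hcdef]
      exact hexp2 _ _
    have hfcont : Continuous f := by
      rw [hfdef]
      exact (continuous_const.mul ((continuous_const.mul hcontq).rexp)).mul
        (((continuous_const.mul (hconte j)).mul (continuous_const.mul (hconte k))).add
          continuous_const)
    -- substitution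
    have hsubst := integral_subst S hdS η f hfcont
    -- pointwise value after substitution
    set P : (Fin n → ℝ) → ℝ := fun x => ∏ i, g1 (x i) with hPdef
    have hcomp : ∀ x : Fin n → ℝ, f (S *ᵥ x + η)
        = (1/4 * c^2) * ((S⁻¹ *ᵥ x) j * (S⁻¹ *ᵥ x) k * P x)
          - (1/2 * c^2 * V⁻¹ k j) * P x := by
      intro x
      have hq : (S *ᵥ x + η) - η = S *ᵥ x := add_sub_cancel_right _ _
      have hAq : V⁻¹ *ᵥ (S *ᵥ x) = S⁻¹ *ᵥ x := by
        rw [Matrix.mulVec_mulVec, hAS]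
      have hquad : (S *ᵥ x) ⬝ᵥ (S⁻¹ *ᵥ x) = x ⬝ᵥ x := by
        rw [Matrix.dotProduct_mulVec, ← Matrix.mulVec_transpose, hSinvsym,
          Matrix.mulVec_mulVec, Matrix.nonsing_inv_mul S hdSU, Matrix.one_mulVec]
      have hexpP : Real.exp (-(1/2) * (x ⬝ᵥ x)) = P x := by
        rw [hPdef, dotProduct, Finset.mul_sum, Real.exp_sum]
        apply Finset.prod_congr rfl
        intro i _
        unfold g1
        congr 1
        ring
      rw [hfdef]
      simp only [hq, hAq, hquad, hexpP]
      ring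
    -- compute the x-integral
    set T : (Fin n → ℝ) → ℝ := fun x => (S⁻¹ *ᵥ x) j * (S⁻¹ *ᵥ x) k * P x with hTdef
    have hexpand : ∀ x : Fin n → ℝ,
        T x = ∑ a, ∑ b, (S⁻¹ j a * S⁻¹ k b) * (x a * x b * P x) := by
      intro x
      rw [hTdef]
      simp only [Matrix.mulVec, dotProduct]
      rw [Finset.sum_mul_sum, Finset.sum_mul]
      apply Finset.sum_congr rfl
      intro a _
      rw [Finset.sum_mul]
      apply Finset.sum_congr rfl
      intro b _
      ring
    have hT : Integrable T := by
      rw [show T = fun x => ∑ a, ∑ b, (S⁻¹ j a * S⁻¹ k b) * (x a * x b * P x)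
        from funext hexpand]
      apply integrable_finset_sum
      intro a _
      apply integrable_finset_sum
      intro b _
      exact (Igab a b).const_mul _
    have hTint : ∫ x, T x = V⁻¹ j k * K := by
      rw [show T = fun x => ∑ a, ∑ b, (S⁻¹ j a * S⁻¹ k b) * (x a * x b * P x)
        from funext hexpand]
      rw [integral_finset_sum _ (fun a _ => integrable_finset_sum _
        (fun b _ => (Igab a b).const_mul _))]
      have hstep : ∀ a : Fin n,
          ∫ x : Fin n → ℝ, ∑ b, (S⁻¹ j a * S⁻¹ k b) * (x a * x b * P x)
            = S⁻¹ j a * S⁻¹ k a * K := by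
        intro a
        rw [integral_finset_sum _ (fun b _ => (Igab a b).const_mul _)]
        have : ∀ b : Fin n, ∫ x : Fin n → ℝ, (S⁻¹ j a * S⁻¹ k b) * (x a * x b * P x)
            = (S⁻¹ j a * S⁻¹ k b) * (if a = b then K else 0) := by
          intro b
          rw [integral_const_mul, hPdef, Mab a b, hKdef]
        rw [Finset.sum_congr rfl (fun b _ => this b)]
        simp only [mul_ite, mul_zero, Finset.sum_ite_eq, Finset.mem_univ, if_true]
      rw [Finset.sum_congr rfl (fun a _ => hstep a), ← Finset.sum_mul]
      rw [Finset.sum_congr rfl (fun a _ => rfl), hsum j k]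
    have hxint : ∫ x, f (S *ᵥ x + η)
        = (1/4 * c^2) * (V⁻¹ j k * K) - (1/2 * c^2 * V⁻¹ k j) * (K) := by
      rw [show (fun x => f (S *ᵥ x + η)) = fun x =>
        (1/4 * c^2) * T x - (1/2 * c^2 * V⁻¹ k j) * P x from funext (fun x => by
          rw [hcomp x, hTdef])]
      rw [integral_sub (hT.const_mul _) ((Ig0 (n := n)).const_mul _), integral_const_mul,
        integral_const_mul, hTint, M0, ← hKdef]
    rw [hVnc, hintegrand, hsubst, ← hddef, hxint, hAkj j k]
    have : d * (1/4 * c^2 * (V⁻¹ j k * K) - 1/2 * c^2 * V⁻¹ j k * K)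
        = -(1/4) * V⁻¹ j k := by
      linear_combination (-(1/4) * V⁻¹ j k) * NORM
    rw [this]
    ring
  have h1 : Vnc hbar (gaussAmp η V) = (hbar ^ 2 / 4) • V⁻¹ := by
    ext j k
    rw [key j k]
    simp [Matrix.smul_apply, smul_eq_mul]
  refine ⟨h1, ?_⟩
  rw [h1, Matrix.mul_smul, Matrix.mul_nonsing_inv V (isUnit_iff_ne_zero.mpr hdetV.ne')]
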